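/- Let X be an S1-valued and Y an S2-valued random variable. X is C-compatible with Y (i.e., for each α ∈ A and all bounded Borel h on S2, E[h(Y)|F^X_α ∨ F^Y_α] = E[h(Y)|F^Y_α]) if and only if for each α ∈ A and each bounded B^{S1}_α-measurable g, E[g(X)|σ(Y)] = E[g(X)|F^Y_α] almost surely. -/

import Mathlib

open MeasureTheory ProbabilityTheory MeasurableSpace Set

section Aux
variable {Ω : Type} {m0 : MeasurableSpace Ω} {P : Measure Ω} [IsProbabilityMeasure P]

lemma integrable_of_bdd' {f : Ω → ℝ} (hf : AEStronglyMeasurable f P) {C : ℝ}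
    (hC : ∀ x, |f x| ≤ C) : Integrable f P :=
  (integrable_const C).mono' hf (Filter.Eventually.of_forall fun x => by
    simpa [Real.norm_eq_abs] using hC x)

lemma measurable_comap_comp {δ : Type*} {m : MeasurableSpace δ} {f : δ → ℝ} (Y : Ω → δ)
    (hf : Measurable[m] f) : Measurable[m.comap Y] fun ω => f (Y ω) :=
  fun s hs => ⟨f ⁻¹' s, hf hs, rfl⟩

lemma integral_mul_condexp₀ {m : MeasurableSpace Ω} (hm : m ≤ m0)
    {φ ψ : Ω → ℝ} (hφ : AEStronglyMeasurable[m] φ P)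
    (hφψ : Integrable (fun x => φ x * ψ x) P) (hψ : Integrable ψ P) :
    ∫ x, φ x * ψ x ∂P = ∫ x, φ x * (P[ψ|m]) x ∂P := by
  rw [← integral_condExp hm (f := fun x => φ x * ψ x)]
  exact integral_congr_ae (condExp_mul_of_aestronglyMeasurable_left hφ hφψ hψ)

lemma integral_mul_condexp_comm {m : MeasurableSpace Ω} (hm : m ≤ m0) {f g : Ω → ℝ}
    (hfm : AEStronglyMeasurable[m0] f P) (hgm : AEStronglyMeasurable[m0] g P)
    {Cf Cg : ℝ} (hCf : ∀ x, |f x| ≤ Cf) (hCg : ∀ x, |g x| ≤ Cg) :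
    ∫ x, f x * (P[g|m]) x ∂P = ∫ x, (P[f|m]) x * g x ∂P := by
  have hfi : Integrable f P := integrable_of_bdd' hfm hCf
  have hgi : Integrable g P := integrable_of_bdd' hgm hCg
  have h1 : Integrable (fun x => (P[g|m]) x * f x) P := by
    have := Integrable.bdd_mul (integrable_condExp (f := g) (m := m)) hfm
      (c := Cf) (Filter.Eventually.of_forall fun x => by simpa [Real.norm_eq_abs] using hCf x)
    exact this.congr (Filter.Eventually.of_forall fun x => by ring)
  have h2 : Integrable (fun x => (P[f|m]) x * g x) P := by
    have := Integrable.bdd_mul (integrable_condExp (f := f) (m := m)) hgm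
      (c := Cg) (Filter.Eventually.of_forall fun x => by simpa [Real.norm_eq_abs] using hCg x)
    exact this.congr (Filter.Eventually.of_forall fun x => by ring)
  calc ∫ x, f x * (P[g|m]) x ∂P = ∫ x, (P[g|m]) x * f x ∂P := by simp_rw [mul_comm]
    _ = ∫ x, (P[g|m]) x * (P[f|m]) x ∂P :=
        integral_mul_condexp₀ hm stronglyMeasurable_condExp.aestronglyMeasurable h1 hfi
    _ = ∫ x, (P[f|m]) x * (P[g|m]) x ∂P := by simp_rw [mul_comm]
    _ = ∫ x, (P[f|m]) x * g x ∂P :=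
        (integral_mul_condexp₀ hm stronglyMeasurable_condExp.aestronglyMeasurable h2 hgi).symm

end Aux

/-- Lemma 2.12 of Kurtz: `X` is `C`-compatible with `Y` iff for each `α` and each
bounded `B^{S1}_α`-measurable `g`, `E[g(X)|Y] = E[g(X)|F^Y_α]` a.s. -/
theorem stmt7
    {S1 S2 : Type} [mS1 : MeasurableSpace S1] [TopologicalSpace S1] [PolishSpace S1] [BorelSpace S1]
    [mS2 : MeasurableSpace S2] [TopologicalSpace S2] [PolishSpace S2] [BorelSpace S2]
    {Ω : Type} [MeasurableSpace Ω] (P : Measure Ω) [IsProbabilityMeasure P]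
    (X : Ω → S1) (Y : Ω → S2) (hX : Measurable X) (hY : Measurable Y)
    {A : Type}
    (B1 : A → MeasurableSpace S1) (hB1 : ∀ α, B1 α ≤ mS1)
    (B2 : A → MeasurableSpace S2) (hB2 : ∀ α, B2 α ≤ mS2) :
    (∀ (α : A) (h : S2 → ℝ), Measurable h → (∃ C, ∀ x, |h x| ≤ C) →
      P[fun ω => h (Y ω)|MeasurableSpace.comap X (B1 α) ⊔ MeasurableSpace.comap Y (B2 α)]
        =ᵐ[P] P[fun ω => h (Y ω)|MeasurableSpace.comap Y (B2 α)])
    ↔ (∀ (α : A) (g : S1 → ℝ), Measurable[B1 α] g → (∃ C, ∀ x, |g x| ≤ C) →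
      P[fun ω => g (X ω)|MeasurableSpace.comap Y mS2]
        =ᵐ[P] P[fun ω => g (X ω)|MeasurableSpace.comap Y (B2 α)]) := by
  constructor
  · -- compatibility → condexp transfer
    intro hyp α g hg hgb
    obtain ⟨Cg₀, hCg₀⟩ := hgb
    set Cg : ℝ := |Cg₀| with hCgdef
    have hCg : ∀ x, |g x| ≤ Cg := fun x => (hCg₀ x).trans (le_abs_self _)
    have hHle : MeasurableSpace.comap Y (B2 α) ≤ MeasurableSpace.comap Y mS2 :=
      MeasurableSpace.comap_mono (hB2 α)
    have hSg : MeasurableSpace.comap Y mS2 ≤ ‹MeasurableSpace Ω› := hY.comap_le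
    have hH : MeasurableSpace.comap Y (B2 α) ≤ ‹MeasurableSpace Ω› := hHle.trans hSg
    have hGX : MeasurableSpace.comap X (B1 α) ≤ ‹MeasurableSpace Ω› :=
      (MeasurableSpace.comap_mono (hB1 α)).trans hX.comap_le
    have hG : MeasurableSpace.comap X (B1 α) ⊔ MeasurableSpace.comap Y (B2 α)
        ≤ ‹MeasurableSpace Ω› := sup_le hGX hH
    have hgX_meas : Measurable fun ω => g (X ω) := (hg.mono (hB1 α) le_rfl).comp hX
    have hgXG : Measurable[MeasurableSpace.comap X (B1 α) ⊔ MeasurableSpace.comap Y (B2 α)]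
        fun ω => g (X ω) :=
      (measurable_comap_comp X hg).mono le_sup_left le_rfl
    have hgXi : Integrable (fun ω => g (X ω)) P :=
      integrable_of_bdd' hgX_meas.aestronglyMeasurable fun ω => hCg _
    refine (ae_eq_condExp_of_forall_setIntegral_eq hSg hgXi
      (fun s _ _ => integrable_condExp.integrableOn) ?_
      ((stronglyMeasurable_condExp.mono hHle).aestronglyMeasurable)).symm
    rintro s ⟨B, hB, rfl⟩ -
    set h : S2 → ℝ := B.indicator 1 with hhdef
    have hh : Measurable h := measurable_one.indicator hB
    have hhb : ∀ x, |h x| ≤ 1 := by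
      intro x; by_cases hx : x ∈ B <;> simp [hhdef, indicator_apply, hx]
    have hhY_meas : Measurable fun ω => h (Y ω) := hh.comp hY
    have hhYi : Integrable (fun ω => h (Y ω)) P :=
      integrable_of_bdd' hhY_meas.aestronglyMeasurable fun ω => hhb _
    have e1 : ∫ ω in Y ⁻¹' B, g (X ω) ∂P = ∫ ω, g (X ω) * h (Y ω) ∂P := by
      rw [← integral_indicator (hY hB)]
      refine integral_congr_ae (Filter.Eventually.of_forall fun ω => ?_)
      by_cases hω : Y ω ∈ B <;> simp [hhdef, indicator_apply, hω]
    have e2 : ∫ ω in Y ⁻¹' B,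
        (P[fun ω => g (X ω)|MeasurableSpace.comap Y (B2 α)]) ω ∂P
        = ∫ ω, (P[fun ω => g (X ω)|MeasurableSpace.comap Y (B2 α)]) ω * h (Y ω) ∂P := by
      rw [← integral_indicator (hY hB)]
      refine integral_congr_ae (Filter.Eventually.of_forall fun ω => ?_)
      by_cases hω : Y ω ∈ B <;> simp [hhdef, indicator_apply, hω]
    have hprod : Integrable (fun ω => g (X ω) * h (Y ω)) P :=
      Integrable.bdd_mul hhYi hgX_meas.aestronglyMeasurable
        (c := Cg) (Filter.Eventually.of_forall fun x => by simpa [Real.norm_eq_abs] using hCg _)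
    have step1 : ∫ ω, g (X ω) * h (Y ω) ∂P
        = ∫ ω, g (X ω) *
          (P[fun ω => h (Y ω)|MeasurableSpace.comap X (B1 α) ⊔ MeasurableSpace.comap Y (B2 α)]) ω ∂P :=
      integral_mul_condexp₀ hG hgXG.stronglyMeasurable.aestronglyMeasurable hprod hhYi
    have step2 : ∫ ω, g (X ω) *
          (P[fun ω => h (Y ω)|MeasurableSpace.comap X (B1 α) ⊔ MeasurableSpace.comap Y (B2 α)]) ω ∂P
        = ∫ ω, g (X ω) * (P[fun ω => h (Y ω)|MeasurableSpace.comap Y (B2 α)]) ω ∂P := by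
      refine integral_congr_ae ?_
      filter_upwards [hyp α h hh ⟨1, hhb⟩] with ω hω
      rw [hω]
    have step3 : ∫ ω, g (X ω) * (P[fun ω => h (Y ω)|MeasurableSpace.comap Y (B2 α)]) ω ∂P
        = ∫ ω, (P[fun ω => g (X ω)|MeasurableSpace.comap Y (B2 α)]) ω * h (Y ω) ∂P :=
      integral_mul_condexp_comm hH hgX_meas.aestronglyMeasurable hhY_meas.aestronglyMeasurable
        (fun ω => hCg (X ω)) (fun ω => hhb (Y ω))
    rw [e1, e2, step1, step2, step3]
  · -- condexp transfer → compatibility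
    intro hyp α h hh hhb
    obtain ⟨Ch₀, hCh₀⟩ := hhb
    set Ch : ℝ := |Ch₀| with hChdef
    have hCh : ∀ x, |h x| ≤ Ch := fun x => (hCh₀ x).trans (le_abs_self _)
    have hHle : MeasurableSpace.comap Y (B2 α) ≤ MeasurableSpace.comap Y mS2 :=
      MeasurableSpace.comap_mono (hB2 α)
    have hSg : MeasurableSpace.comap Y mS2 ≤ ‹MeasurableSpace Ω› := hY.comap_le
    have hH : MeasurableSpace.comap Y (B2 α) ≤ ‹MeasurableSpace Ω› := hHle.trans hSg
    have hGX : MeasurableSpace.comap X (B1 α) ≤ ‹MeasurableSpace Ω› :=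
      (MeasurableSpace.comap_mono (hB1 α)).trans hX.comap_le
    have hG : MeasurableSpace.comap X (B1 α) ⊔ MeasurableSpace.comap Y (B2 α)
        ≤ ‹MeasurableSpace Ω› := sup_le hGX hH
    have hhY_meas : Measurable fun ω => h (Y ω) := hh.comp hY
    have hhYi : Integrable (fun ω => h (Y ω)) P :=
      integrable_of_bdd' hhY_meas.aestronglyMeasurable fun ω => hCh _
    refine (ae_eq_condExp_of_forall_setIntegral_eq hG hhYi
      (fun s _ _ => integrable_condExp.integrableOn) ?_
      ((stronglyMeasurable_condExp.mono (le_sup_right (a := MeasurableSpace.comap X (B1 α)))).aestronglyMeasurable)).symm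
    intro s hs _
    -- π-system induction over generators of the sup σ-algebra
    set S : Set (Set Ω) := {u | ∃ a b, MeasurableSet[MeasurableSpace.comap X (B1 α)] a ∧
      MeasurableSet[MeasurableSpace.comap Y (B2 α)] b ∧ u = a ∩ b} with hSdef
    have hGS : MeasurableSpace.comap X (B1 α) ⊔ MeasurableSpace.comap Y (B2 α)
        = MeasurableSpace.generateFrom S := by
      refine le_antisymm (sup_le ?_ ?_) (MeasurableSpace.generateFrom_le ?_)
      · exact fun a ha => MeasurableSpace.measurableSet_generateFrom
          ⟨a, Set.univ, ha, MeasurableSet.univ, (Set.inter_univ a).symm⟩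
      · exact fun b hb => MeasurableSpace.measurableSet_generateFrom
          ⟨Set.univ, b, MeasurableSet.univ, hb, (Set.univ_inter b).symm⟩
      · rintro u ⟨a, b, ha, hb, rfl⟩
        exact ((le_sup_left (a := MeasurableSpace.comap X (B1 α))
            (b := MeasurableSpace.comap Y (B2 α))) a ha).inter
          ((le_sup_right (a := MeasurableSpace.comap X (B1 α))
            (b := MeasurableSpace.comap Y (B2 α))) b hb)
    have hSpi : IsPiSystem S := by
      rintro u ⟨a, b, ha, hb, rfl⟩ v ⟨a', b', ha', hb', rfl⟩ -
      exact ⟨a ∩ a', b ∩ b', ha.inter ha', hb.inter hb', by rw [Set.inter_inter_inter_comm]⟩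
    have key : ∀ t, MeasurableSet[MeasurableSpace.comap X (B1 α) ⊔
        MeasurableSpace.comap Y (B2 α)] t →
        (∫ ω in t, (P[fun ω => h (Y ω)|MeasurableSpace.comap Y (B2 α)]) ω ∂P
          = ∫ ω in t, h (Y ω) ∂P) := by
      refine MeasurableSpace.induction_on_inter (m := MeasurableSpace.comap X (B1 α) ⊔ MeasurableSpace.comap Y (B2 α)) hGS hSpi (by simp) ?_ ?_ ?_
      · -- basic sets
        rintro u ⟨a, b, ⟨s1, hs1, rfl⟩, ⟨s2, hs2, rfl⟩, rfl⟩
        set g : S1 → ℝ := s1.indicator 1 with hgdef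
        set k : S2 → ℝ := s2.indicator 1 with hkdef
        have hgm : Measurable[B1 α] g := by
          letI : MeasurableSpace S1 := B1 α
          exact measurable_one.indicator hs1
        have hkm : Measurable[B2 α] k := by
          letI : MeasurableSpace S2 := B2 α
          exact measurable_one.indicator hs2
        have hgb : ∀ x, |g x| ≤ 1 := by
          intro x; by_cases hx : x ∈ s1 <;> simp [hgdef, indicator_apply, hx]
        have hkb : ∀ x, |k x| ≤ 1 := by
          intro x; by_cases hx : x ∈ s2 <;> simp [hkdef, indicator_apply, hx]
        have hgX_meas : Measurable fun ω => g (X ω) := (hgm.mono (hB1 α) le_rfl).comp hX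
        have hkY_meas : Measurable fun ω => k (Y ω) := (hkm.mono (hB2 α) le_rfl).comp hY
        have hgXi : Integrable (fun ω => g (X ω)) P :=
          integrable_of_bdd' hgX_meas.aestronglyMeasurable fun ω => hgb _
        set ψ : Ω → ℝ := fun ω => k (Y ω) * h (Y ω) with hψdef
        have hψ_meas : Measurable ψ := hkY_meas.mul hhY_meas
        have hψb : ∀ ω, |ψ ω| ≤ Ch := by
          intro ω
          calc |ψ ω| = |k (Y ω)| * |h (Y ω)| := abs_mul _ _
            _ ≤ 1 * Ch := mul_le_mul (hkb _) (hCh _) (abs_nonneg _) zero_le_one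
            _ = Ch := one_mul _
        have hψi : Integrable ψ P := integrable_of_bdd' hψ_meas.aestronglyMeasurable hψb
        have hψS : AEStronglyMeasurable[MeasurableSpace.comap Y mS2] ψ P := by
          refine StronglyMeasurable.aestronglyMeasurable ?_
          exact (measurable_comap_comp Y ((hkm.mono (hB2 α) le_rfl).mul hh)).stronglyMeasurable
        have hψgXi : Integrable (fun ω => ψ ω * g (X ω)) P :=
          Integrable.bdd_mul hgXi hψ_meas.aestronglyMeasurable
            (c := Ch) (Filter.Eventually.of_forall fun ω => by rw [Real.norm_eq_abs]; exact hψb ω)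
        -- step A: condition g(X) on σ(Y), then shrink to F^Y_α by hypothesis
        have stepA : ∫ ω, ψ ω * g (X ω) ∂P
            = ∫ ω, ψ ω * (P[fun ω => g (X ω)|MeasurableSpace.comap Y mS2]) ω ∂P :=
          integral_mul_condexp₀ hSg hψS hψgXi hgXi
        have stepB : ∫ ω, ψ ω * (P[fun ω => g (X ω)|MeasurableSpace.comap Y mS2]) ω ∂P
            = ∫ ω, ψ ω * (P[fun ω => g (X ω)|MeasurableSpace.comap Y (B2 α)]) ω ∂P := by
          refine integral_congr_ae ?_
          filter_upwards [hyp α g hgm ⟨1, hgb⟩] with ω hω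
          rw [hω]
        -- step C: replace h(Y) by its conditional expectation given F^Y_α
        have hφH : AEStronglyMeasurable[MeasurableSpace.comap Y (B2 α)]
            (fun ω => k (Y ω) * (P[fun ω => g (X ω)|MeasurableSpace.comap Y (B2 α)]) ω) P :=
          StronglyMeasurable.aestronglyMeasurable
            (((measurable_comap_comp Y hkm).stronglyMeasurable).mul stronglyMeasurable_condExp)
        have hφhYi : Integrable
            (fun ω => (k (Y ω) * (P[fun ω => g (X ω)|MeasurableSpace.comap Y (B2 α)]) ω)
              * h (Y ω)) P := by
          have : Integrable (fun ω => (k (Y ω) * h (Y ω)) *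
              (P[fun ω => g (X ω)|MeasurableSpace.comap Y (B2 α)]) ω) P :=
            Integrable.bdd_mul integrable_condExp hψ_meas.aestronglyMeasurable
              (c := Ch) (Filter.Eventually.of_forall fun ω => by rw [Real.norm_eq_abs]; exact hψb ω)
          exact this.congr (Filter.Eventually.of_forall fun ω => by ring)
        have stepC : ∫ ω, (k (Y ω) * (P[fun ω => g (X ω)|MeasurableSpace.comap Y (B2 α)]) ω)
              * h (Y ω) ∂P
            = ∫ ω, (k (Y ω) * (P[fun ω => g (X ω)|MeasurableSpace.comap Y (B2 α)]) ω)
              * (P[fun ω => h (Y ω)|MeasurableSpace.comap Y (B2 α)]) ω ∂P :=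
          integral_mul_condexp₀ hH hφH hφhYi hhYi
        -- step D: replace E[g(X)|F^Y_α] back by g(X)
        have hφ'H : AEStronglyMeasurable[MeasurableSpace.comap Y (B2 α)]
            (fun ω => k (Y ω) * (P[fun ω => h (Y ω)|MeasurableSpace.comap Y (B2 α)]) ω) P :=
          StronglyMeasurable.aestronglyMeasurable
            (((measurable_comap_comp Y hkm).stronglyMeasurable).mul stronglyMeasurable_condExp)
        have hφ'gXi : Integrable
            (fun ω => (k (Y ω) * (P[fun ω => h (Y ω)|MeasurableSpace.comap Y (B2 α)]) ω)
              * g (X ω)) P := by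
          have : Integrable (fun ω => (k (Y ω) * g (X ω)) *
              (P[fun ω => h (Y ω)|MeasurableSpace.comap Y (B2 α)]) ω) P :=
            Integrable.bdd_mul integrable_condExp (hkY_meas.mul hgX_meas).aestronglyMeasurable
              (c := 1) (Filter.Eventually.of_forall fun ω => by
                have := mul_le_mul (hkb (Y ω)) (hgb (X ω)) (abs_nonneg _) zero_le_one
                simpa [Real.norm_eq_abs, abs_mul] using this.trans (by norm_num))
          exact this.congr (Filter.Eventually.of_forall fun ω => by ring)
        have stepD : ∫ ω, (k (Y ω) * (P[fun ω => h (Y ω)|MeasurableSpace.comap Y (B2 α)]) ω)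
              * g (X ω) ∂P
            = ∫ ω, (k (Y ω) * (P[fun ω => h (Y ω)|MeasurableSpace.comap Y (B2 α)]) ω)
              * (P[fun ω => g (X ω)|MeasurableSpace.comap Y (B2 α)]) ω ∂P :=
          integral_mul_condexp₀ hH hφ'H hφ'gXi hgXi
        -- assemble
        have lhs_eq : ∫ ω in X ⁻¹' s1 ∩ Y ⁻¹' s2, h (Y ω) ∂P = ∫ ω, ψ ω * g (X ω) ∂P := by
          rw [← integral_indicator ((hX (hB1 α _ hs1)).inter (hY (hB2 α _ hs2)))]
          refine integral_congr_ae (Filter.Eventually.of_forall fun ω => ?_)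
          by_cases h1 : X ω ∈ s1 <;> by_cases h2 : Y ω ∈ s2 <;>
            simp [hψdef, hgdef, hkdef, indicator_apply, h1, h2]
        have rhs_eq : ∫ ω in X ⁻¹' s1 ∩ Y ⁻¹' s2,
              (P[fun ω => h (Y ω)|MeasurableSpace.comap Y (B2 α)]) ω ∂P
            = ∫ ω, (k (Y ω) * (P[fun ω => h (Y ω)|MeasurableSpace.comap Y (B2 α)]) ω)
              * g (X ω) ∂P := by
          rw [← integral_indicator ((hX (hB1 α _ hs1)).inter (hY (hB2 α _ hs2)))]
          refine integral_congr_ae (Filter.Eventually.of_forall fun ω => ?_)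
          by_cases h1 : X ω ∈ s1 <;> by_cases h2 : Y ω ∈ s2 <;>
            simp [hgdef, hkdef, indicator_apply, h1, h2]
        have mid : ∫ ω, ψ ω * (P[fun ω => g (X ω)|MeasurableSpace.comap Y (B2 α)]) ω ∂P
            = ∫ ω, (k (Y ω) * (P[fun ω => g (X ω)|MeasurableSpace.comap Y (B2 α)]) ω)
              * h (Y ω) ∂P := by
          refine integral_congr_ae (Filter.Eventually.of_forall fun ω => ?_)
          simp only [hψdef]; ring
        have mid2 : ∫ ω, (k (Y ω) * (P[fun ω => g (X ω)|MeasurableSpace.comap Y (B2 α)]) ω)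
              * (P[fun ω => h (Y ω)|MeasurableSpace.comap Y (B2 α)]) ω ∂P
            = ∫ ω, (k (Y ω) * (P[fun ω => h (Y ω)|MeasurableSpace.comap Y (B2 α)]) ω)
              * (P[fun ω => g (X ω)|MeasurableSpace.comap Y (B2 α)]) ω ∂P := by
          refine integral_congr_ae (Filter.Eventually.of_forall fun ω => ?_)
          ring
        rw [rhs_eq, lhs_eq, stepA, stepB, mid, stepC, mid2, ← stepD]
      · -- complements
        intro t htG hCt
        have ht0 : MeasurableSet t := hG t htG
        have h1 := integral_add_compl ht0 hhYi
        have h2 := integral_add_compl ht0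
          (integrable_condExp (f := fun ω => h (Y ω)) (m := MeasurableSpace.comap Y (B2 α)) (μ := P))
        have htot : ∫ ω, (P[fun ω => h (Y ω)|MeasurableSpace.comap Y (B2 α)]) ω ∂P
            = ∫ ω, h (Y ω) ∂P := integral_condExp hH
        linarith
      · -- disjoint unions
        intro f hdisj hmeasG hC
        rw [integral_iUnion (fun i => hG _ (hmeasG i)) hdisj integrable_condExp.integrableOn,
          integral_iUnion (fun i => hG _ (hmeasG i)) hdisj hhYi.integrableOn]
        exact tsum_congr hC
    exact key s hs
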